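/- (Gentle Measurement Lemma) Let ρ be a density matrix on ℂ^d, let E be a Hermitian d×d matrix with 0 ≤ E ≤ I (both E and I − E positive semidefinite), and let 0 ≤ ε < 1 be such that tr(Eρ) ≥ 1 − ε. Let √E denote the positive semidefinite square root of E, and define the post-measurement state ρ' = (√E ρ √E) / tr(Eρ). Then D(ρ, ρ') ≤ √ε. -/

import Mathlib

open scoped Matrix Kronecker BigOperators ComplexOrder

/-- The positive semidefinite square root of a positive semidefinite matrix
(the definition `Matrix.PosSemidef.sqrt` of the older Mathlib, removed since). -/
noncomputable def Matrix.PosSemidef.sqrt {n : Type*} [Fintype n] [DecidableEq n]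
    {𝕜 : Type*} [RCLike 𝕜] {A : Matrix n n 𝕜} (hA : A.PosSemidef) : Matrix n n 𝕜 :=
  (hA.1.eigenvectorUnitary : Matrix n n 𝕜) *
    Matrix.diagonal ((↑) ∘ Real.sqrt ∘ hA.1.eigenvalues) *
    (star hA.1.eigenvectorUnitary : Matrix n n 𝕜)

open Matrix

section spec
variable {n : Type*} [Fintype n] [DecidableEq n] {A : Matrix n n ℂ} (hA : A.IsHermitian)

noncomputable def specM (hA : A.IsHermitian) (f : n → ℝ) : Matrix n n ℂ :=
  (hA.eigenvectorUnitary : Matrix n n ℂ) * Matrix.diagonal (RCLike.ofReal ∘ f) *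
    star (hA.eigenvectorUnitary : Matrix n n ℂ)

lemma specM_mul (f g : n → ℝ) : specM hA f * specM hA g = specM hA (f * g) := by
  have h1 : (star (hA.eigenvectorUnitary : Matrix n n ℂ)) * (hA.eigenvectorUnitary : Matrix n n ℂ) = 1 :=
    Matrix.mem_unitaryGroup_iff'.mp hA.eigenvectorUnitary.2
  have hd : (Matrix.diagonal (RCLike.ofReal ∘ f) : Matrix n n ℂ) * Matrix.diagonal (RCLike.ofReal ∘ g)
      = Matrix.diagonal (RCLike.ofReal ∘ (f * g)) := by
    ext i j
    by_cases h : i = j <;> simp [Matrix.diagonal_apply, h, Matrix.mul_apply, Finset.sum_ite_eq]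
  simp only [specM, Matrix.mul_assoc]
  rw [← Matrix.mul_assoc (star (hA.eigenvectorUnitary : Matrix n n ℂ)), h1, Matrix.one_mul,
    ← Matrix.mul_assoc (Matrix.diagonal _), hd]

lemma specM_trace (f : n → ℝ) : (specM hA f).trace = ((∑ i, f i : ℝ) : ℂ) := by
  have h1 : (star (hA.eigenvectorUnitary : Matrix n n ℂ)) * (hA.eigenvectorUnitary : Matrix n n ℂ) = 1 :=
    Matrix.mem_unitaryGroup_iff'.mp hA.eigenvectorUnitary.2
  rw [specM, Matrix.trace_mul_cycle, h1, Matrix.one_mul, Matrix.trace_diagonal]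
  push_cast
  rfl

lemma specM_herm (f : n → ℝ) : (specM hA f).IsHermitian := by
  have hd : Matrix.IsHermitian (Matrix.diagonal (RCLike.ofReal ∘ f) : Matrix n n ℂ) := by
    apply Matrix.isHermitian_diagonal_of_self_adjoint
    funext i
    simp [Pi.star_apply, RCLike.star_def]
  simpa [specM, Matrix.star_eq_conjTranspose] using
    Matrix.isHermitian_mul_mul_conjTranspose (hA.eigenvectorUnitary : Matrix n n ℂ) hd

lemma specM_psd {f : n → ℝ} (hf : ∀ i, 0 ≤ f i) : (specM hA f).PosSemidef := by
  have hd : (Matrix.diagonal (RCLike.ofReal ∘ f) : Matrix n n ℂ).PosSemidef := by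
    apply Matrix.PosSemidef.diagonal
    intro i
    show (0:ℂ) ≤ RCLike.ofReal (f i)
    exact RCLike.ofReal_nonneg.mpr (hf i)
  simpa [specM, Matrix.star_eq_conjTranspose] using
    hd.mul_mul_conjTranspose_same (hA.eigenvectorUnitary : Matrix n n ℂ)

lemma specM_one : specM hA (fun _ => (1:ℝ)) = 1 := by
  have h2 : (hA.eigenvectorUnitary : Matrix n n ℂ) * (star (hA.eigenvectorUnitary : Matrix n n ℂ)) = 1 :=
    Matrix.mem_unitaryGroup_iff.mp hA.eigenvectorUnitary.2
  have hd : (Matrix.diagonal (RCLike.ofReal ∘ (fun _ => (1:ℝ))) : Matrix n n ℂ) = 1 := by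
    ext i j
    by_cases h : i = j <;> simp [Matrix.diagonal_apply, h, Matrix.one_apply]
  rw [specM, hd, Matrix.mul_one, h2]

lemma specM_eigen : specM hA hA.eigenvalues = A := (hA.spectral_theorem).symm

lemma specM_add (f g : n → ℝ) : specM hA (f + g) = specM hA f + specM hA g := by
  simp only [specM]
  rw [← Matrix.add_mul, ← Matrix.mul_add]
  congr 2
  ext i j
  by_cases h : i = j <;> simp [Matrix.diagonal_apply, h]

end spec

lemma Matrix.PosSemidef.posSemidef_sqrt {n : Type*} [Fintype n] [DecidableEq n]
    {A : Matrix n n ℂ} (hA : A.PosSemidef) : hA.sqrt.PosSemidef :=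
  specM_psd hA.1 (f := Real.sqrt ∘ hA.1.eigenvalues) fun _ => Real.sqrt_nonneg _

lemma Matrix.PosSemidef.sqrt_mul_self {n : Type*} [Fintype n] [DecidableEq n]
    {A : Matrix n n ℂ} (hA : A.PosSemidef) : hA.sqrt * hA.sqrt = A := by
  show specM hA.1 (Real.sqrt ∘ hA.1.eigenvalues) * specM hA.1 (Real.sqrt ∘ hA.1.eigenvalues) = A
  rw [specM_mul]
  conv_rhs => rw [← specM_eigen hA.1]
  congr 1
  funext i
  simp only [Pi.mul_apply, Function.comp_apply]
  exact Real.mul_self_sqrt (hA.eigenvalues_nonneg i)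

open scoped MatrixOrder Matrix.Norms.L2Operator in
lemma psdSqrt_eq_cfc {n : Type*} [Fintype n] [DecidableEq n] {A : Matrix n n ℂ}
    (hA : A.PosSemidef) : hA.sqrt = CFC.sqrt A := by
  rw [CFC.sqrt_eq_cfc, cfc_nnreal_eq_real _ A, hA.1.cfc_eq]
  simp [Matrix.PosSemidef.sqrt, IsHermitian.cfc, Function.comp_def, max_eq_left,
    hA.eigenvalues_nonneg]

open scoped MatrixOrder Matrix.Norms.L2Operator in
lemma Matrix.PosSemidef.eq_sqrt_of_sq_eq {n : Type*} [Fintype n] [DecidableEq n]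
    {A B : Matrix n n ℂ} (hB : B.PosSemidef) (hA : A.PosSemidef) (h : B ^ 2 = A) :
    B = hA.sqrt := by
  rw [psdSqrt_eq_cfc]
  exact (CFC.sqrt_unique (by rw [← h, sq]) (nonneg_iff_posSemidef.mpr hB)).symm

lemma trace_cs {n : Type*} [Fintype n] [DecidableEq n] (A B : Matrix n n ℂ) :
    ‖(Aᴴ * B).trace‖ ≤
      Real.sqrt ((Aᴴ * A).trace.re) * Real.sqrt ((Bᴴ * B).trace.re) := by
  classical
  let F : Matrix n n ℂ → EuclideanSpace ℂ (n × n) := fun C => WithLp.toLp 2 (fun p : n × n => C p.1 p.2)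
  have htr : ∀ (C D : Matrix n n ℂ), (Cᴴ * D).trace
      = ∑ p : n × n, (starRingEnd ℂ) (C p.1 p.2) * D p.1 p.2 := by
    intro C D
    rw [Fintype.sum_prod_type]
    simp only [Matrix.trace, Matrix.diag, Matrix.mul_apply, Matrix.conjTranspose_apply]
    rw [Finset.sum_comm]
    simp [mul_comm]
  have hinner : ∀ (C D : Matrix n n ℂ), (Cᴴ * D).trace = @inner ℂ _ _ (F C) (F D) := by
    intro C D
    rw [htr, PiLp.inner_apply]
    simp [RCLike.inner_apply, F, mul_comm]
  have key := norm_inner_le_norm (𝕜 := ℂ) (F A) (F B)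
  rw [← hinner A B] at key
  have hnorm : ∀ (C : Matrix n n ℂ), ‖F C‖ = Real.sqrt ((Cᴴ * C).trace.re) := by
    intro C
    rw [EuclideanSpace.norm_eq]
    congr 1
    rw [htr C C, Complex.re_sum]
    congr 1
    ext p
    simp only [Complex.mul_re, Complex.conj_re, Complex.conj_im]
    rw [show ‖F C p‖ = ‖C p.1 p.2‖ from rfl, Complex.sq_norm, Complex.normSq_apply]
    ring
  rw [hnorm A, hnorm B] at key
  exact key

lemma eig_le_one {n : Type*} [Fintype n] [DecidableEq n] {E : Matrix n n ℂ}
    (hEH : E.IsHermitian) (hE1 : ((1 : Matrix n n ℂ) - E).PosSemidef) (i : n) :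
    hEH.eigenvalues i ≤ 1 := by
  have hv := hEH.mulVec_eigenvectorBasis i
  set v := ⇑(hEH.eigenvectorBasis i) with hvdef
  have hunit : star v ⬝ᵥ v = 1 := by
    have hn : ‖hEH.eigenvectorBasis i‖ = 1 := (hEH.eigenvectorBasis.orthonormal).1 i
    have : (star v ⬝ᵥ v) = @inner ℂ _ _ (hEH.eigenvectorBasis i) (hEH.eigenvectorBasis i) := by
      rw [PiLp.inner_apply]
      simp only [dotProduct, RCLike.inner_apply, Pi.star_apply, mul_comm]
      rfl
    rw [this, inner_self_eq_norm_sq_to_K, hn]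
    norm_num
  have h := hE1.dotProduct_mulVec_nonneg v
  rw [Matrix.sub_mulVec, Matrix.one_mulVec, hv] at h
  rw [dotProduct_sub, dotProduct_smul, hunit] at h
  have h2 : (0:ℂ) ≤ 1 - (hEH.eigenvalues i : ℂ) := by simpa using h
  have h3 := (Complex.le_def.mp h2).1
  simp at h3
  linarith

lemma trace_psd_nonneg {n : Type*} [Fintype n] [DecidableEq n] {A : Matrix n n ℂ}
    (hA : A.PosSemidef) : 0 ≤ A.trace := by
  have hd : ∀ i, 0 ≤ A i i := by
    intro i
    simpa [dotProduct, Matrix.mulVec_single, Pi.single_apply] using hA.dotProduct_mulVec_nonneg (Pi.single i 1)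
  exact Finset.sum_nonneg fun i _ => hd i

lemma cnonneg_re {z : ℂ} (h : 0 ≤ z) : 0 ≤ z.re ∧ z = (z.re : ℂ) := by
  have := Complex.le_def.mp h
  simp only [Complex.zero_re, Complex.zero_im] at this
  refine ⟨this.1, ?_⟩
  apply Complex.ext <;> simp [← this.2]

lemma trace_mul_psd_nonneg {n : Type*} [Fintype n] [DecidableEq n] {A B : Matrix n n ℂ}
    (hA : A.PosSemidef) (hB : B.PosSemidef) : 0 ≤ (A * B).trace := by
  have h1 : (A * B).trace = (hA.sqrt * B * hA.sqrt).trace := by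
    rw [Matrix.trace_mul_cycle, hA.sqrt_mul_self]
  have h2 : (hA.sqrt * B * hA.sqrt).PosSemidef := by
    have := hB.mul_mul_conjTranspose_same hA.sqrt
    rwa [hA.posSemidef_sqrt.1] at this
  rw [h1]
  exact trace_psd_nonneg h2

example {n : Type*} [Fintype n] [DecidableEq n] {E : Matrix n n ℂ} (hE : E.PosSemidef) :
    hE.sqrt = (hE.1.eigenvectorUnitary : Matrix n n ℂ) *
      Matrix.diagonal (RCLike.ofReal ∘ (Real.sqrt ∘ hE.1.eigenvalues)) *
      star (hE.1.eigenvectorUnitary : Matrix n n ℂ) := rfl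

noncomputable def traceNorm {n : Type*} [Fintype n] [DecidableEq n]
    (A : Matrix n n ℂ) : ℝ :=
  ((Matrix.posSemidef_conjTranspose_mul_self A).sqrt.trace).re

noncomputable def traceDist {n : Type*} [Fintype n] [DecidableEq n]
    (ρ σ : Matrix n n ℂ) : ℝ :=
  traceNorm (ρ - σ) / 2

def IsDensityMatrix {n : Type*} [Fintype n] (ρ : Matrix n n ℂ) : Prop :=
  ρ.PosSemidef ∧ ρ.trace = 1

set_option maxHeartbeats 2000000 in
/-- Gentle Measurement Lemma: if a measurement element `E` detects the
state `ρ` with probability at least `1 - ε`, then the post-measurement state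
`√E ρ √E / tr(Eρ)` is `√ε`-close to `ρ` in trace distance. -/
theorem gentle_measurement
    {d : ℕ} (ρ E : Matrix (Fin d) (Fin d) ℂ)
    (hρ : IsDensityMatrix ρ) (hEH : E.IsHermitian) (hE : E.PosSemidef)
    (hE1 : ((1 : Matrix (Fin d) (Fin d) ℂ) - E).PosSemidef)
    (ε : ℝ) (hε0 : 0 ≤ ε) (hε1 : ε < 1)
    (htr : 1 - ε ≤ ((E * ρ).trace).re) :
    traceDist ρ (((E * ρ).trace)⁻¹ • (hE.sqrt * ρ * hE.sqrt)) ≤ Real.sqrt ε := by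
  classical
  obtain ⟨hρpsd, hρtr⟩ := hρ
  set SE := hE.sqrt with hSEdef
  have hSEpsd : SE.PosSemidef := hE.posSemidef_sqrt
  have hSEh : SEᴴ = SE := hSEpsd.1
  have hSE2 : SE * SE = E := hE.sqrt_mul_self
  set SR := hρpsd.sqrt with hSRdef
  have hSRh : SRᴴ = SR := hρpsd.posSemidef_sqrt.1
  have hSR2 : SR * SR = ρ := hρpsd.sqrt_mul_self
  set T := SE * ρ * SE with hTdef
  have hTpsd : T.PosSemidef := by
    have := hρpsd.mul_mul_conjTranspose_same SE
    rwa [hSEh] at this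
  have hTtr : T.trace = (E * ρ).trace := by
    rw [hTdef, Matrix.trace_mul_cycle, hSE2]
  set p := (E * ρ).trace with hpdef
  have hppos : 0 ≤ p := hTtr ▸ trace_psd_nonneg hTpsd
  obtain ⟨hpre0, hpreal⟩ := cnonneg_re hppos
  set r := p.re with hrdef
  have hr1 : 1 - ε ≤ r := htr
  have hrpos : 0 < r := lt_of_lt_of_le (by linarith) hr1
  have hp0 : p ≠ 0 := by
    rw [hpreal]
    exact_mod_cast ne_of_gt hrpos
  set ρ' := p⁻¹ • T with hρ'def
  have hpinv_nonneg : (0:ℂ) ≤ p⁻¹ := by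
    rw [hpreal, ← Complex.ofReal_inv]
    exact RCLike.ofReal_nonneg.mpr (inv_nonneg.mpr hpre0)
  have hρ'psd : ρ'.PosSemidef := by
    refine Matrix.PosSemidef.of_dotProduct_mulVec_nonneg ?_ ?_
    · show (p⁻¹ • T)ᴴ = p⁻¹ • T
      rw [Matrix.conjTranspose_smul, hTpsd.1]
      congr 1
      rw [hpreal, ← Complex.ofReal_inv]
      exact Complex.conj_ofReal _
    · intro x
      rw [hρ'def, Matrix.smul_mulVec, dotProduct_smul, smul_eq_mul]
      exact mul_nonneg hpinv_nonneg (hTpsd.dotProduct_mulVec_nonneg x)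
  have hρ'tr : ρ'.trace = 1 := by
    rw [hρ'def, Matrix.trace_smul, hTtr, smul_eq_mul, inv_mul_cancel₀ hp0]
  have hTp : T = p • ρ' := by
    rw [hρ'def, smul_smul, mul_inv_cancel₀ hp0, one_smul]
  set Δ := ρ - ρ' with hΔdef
  have hΔh : Δ.IsHermitian := hρpsd.1.sub hρ'psd.1
  set μ := hΔh.eigenvalues with hμdef
  set χ : Fin d → ℝ := fun i => if 0 ≤ μ i then (1:ℝ) else 0 with hχdef
  set P := specM hΔh χ with hPdef
  set Q := specM hΔh (fun i => 1 - χ i) with hQdef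
  have hPQ : P + Q = 1 := by
    rw [hPdef, hQdef, ← specM_add]
    rw [show (χ + fun i => 1 - χ i) = (fun _ : Fin d => (1:ℝ)) by funext i; simp]
    exact specM_one hΔh
  have hχmul : χ * χ = χ := by
    funext i
    by_cases h : 0 ≤ μ i <;> simp [hχdef, h]
  have hPP : P * P = P := by rw [hPdef, specM_mul, hχmul]
  have hQmul : ((fun i => 1 - χ i) * fun i => 1 - χ i) = fun i => 1 - χ i := by
    funext i
    by_cases h : 0 ≤ μ i <;> simp [hχdef, h]
  have hQQ : Q * Q = Q := by rw [hQdef, specM_mul, hQmul]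
  have hPh : Pᴴ = P := specM_herm hΔh χ
  have hQh : Qᴴ = Q := specM_herm hΔh _
  have hχnonneg : ∀ i, 0 ≤ χ i := by
    intro i
    rw [hχdef]
    dsimp only
    split <;> norm_num
  have hχle1 : ∀ i, χ i ≤ 1 := by
    intro i
    rw [hχdef]
    dsimp only
    split <;> norm_num
  have hPpsd : P.PosSemidef := specM_psd hΔh hχnonneg
  have hQpsd : Q.PosSemidef := specM_psd hΔh fun i => by linarith [hχle1 i]
  have hΔspec : Δ = specM hΔh μ := (specM_eigen hΔh).symm
  have hΔtr : Δ.trace = 0 := by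
    rw [hΔdef, Matrix.trace_sub, hρtr, hρ'tr, sub_self]
  have hμsum : ∑ i, μ i = 0 := by
    have h1 := specM_trace hΔh μ
    rw [← hΔspec, hΔtr] at h1
    exact_mod_cast h1.symm
  set m := ∑ i, max (μ i) 0 with hmdef
  have hm0 : 0 ≤ m := Finset.sum_nonneg fun i _ => le_max_right _ _
  have hχμ : χ * μ = fun i => max (μ i) 0 := by
    funext i
    show χ i * μ i = max (μ i) 0
    rw [hχdef]
    dsimp only
    by_cases h : 0 ≤ μ i
    · rw [if_pos h, max_eq_left h, one_mul]
    · rw [if_neg h, max_eq_right (le_of_not_ge h), zero_mul]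
  have htrPΔ : (P * Δ).trace = ((m : ℝ) : ℂ) := by
    have h1 := specM_trace hΔh (χ * μ)
    rw [← specM_mul, ← hΔspec, hχμ] at h1
    rw [hmdef]
    convert h1 using 3
  -- trace norm computation
  set ν : Fin d → ℝ := fun i => |μ i| with hνdef
  have hNpsd : (specM hΔh ν).PosSemidef := specM_psd hΔh fun i => abs_nonneg _
  have hsq : (specM hΔh ν) ^ 2 = Δᴴ * Δ := by
    rw [pow_two, specM_mul, hΔh]
    have hνμ : ν * ν = μ * μ := by
      funext i
      rw [hνdef]
      exact abs_mul_abs_self (μ i)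
    rw [hνμ, ← specM_mul, ← hΔspec]
  have hsqrt : specM hΔh ν = (Matrix.posSemidef_conjTranspose_mul_self Δ).sqrt :=
    hNpsd.eq_sqrt_of_sq_eq (Matrix.posSemidef_conjTranspose_mul_self Δ) hsq
  have hTN : traceNorm Δ = 2 * m := by
    rw [traceNorm, ← hsqrt, specM_trace, Complex.ofReal_re]
    have : ∀ i, ν i = 2 * max (μ i) 0 - μ i := by
      intro i
      rw [hνdef]
      dsimp only
      rcases le_or_gt 0 (μ i) with h | h
      · rw [abs_of_nonneg h, max_eq_left h]; ring
      · rw [abs_of_neg h, max_eq_right h.le]; ring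
    rw [Finset.sum_congr rfl fun i _ => this i, Finset.sum_sub_distrib, hμsum, ← Finset.mul_sum]
    ring
  -- a and b
  have haT := cnonneg_re (trace_mul_psd_nonneg hPpsd hρpsd)
  have hbT := cnonneg_re (trace_mul_psd_nonneg hPpsd hρ'psd)
  have haQ := cnonneg_re (trace_mul_psd_nonneg hQpsd hρpsd)
  have hbQ := cnonneg_re (trace_mul_psd_nonneg hQpsd hρ'psd)
  set a := (P * ρ).trace.re with hadef
  set b := (P * ρ').trace.re with hbdef
  have ha0 : 0 ≤ a := haT.1
  have hb0 : 0 ≤ b := hbT.1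
  have haeq : (P * ρ).trace = (a : ℂ) := haT.2
  have hbeq : (P * ρ').trace = (b : ℂ) := hbT.2
  have hsumρ : (P * ρ).trace + (Q * ρ).trace = 1 := by
    rw [← Matrix.trace_add, ← Matrix.add_mul, hPQ, Matrix.one_mul, hρtr]
  have hsumρ' : (P * ρ').trace + (Q * ρ').trace = 1 := by
    rw [← Matrix.trace_add, ← Matrix.add_mul, hPQ, Matrix.one_mul, hρ'tr]
  have hQρre : (Q * ρ).trace.re = 1 - a := by
    have := congrArg Complex.re hsumρ
    simp only [Complex.add_re, Complex.one_re] at this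
    linarith
  have hQρ're : (Q * ρ').trace.re = 1 - b := by
    have := congrArg Complex.re hsumρ'
    simp only [Complex.add_re, Complex.one_re] at this
    linarith
  have ha1 : a ≤ 1 := by linarith [haQ.1, hQρre]
  have hb1 : b ≤ 1 := by linarith [hbQ.1, hQρ're]
  have hQρeq : (Q * ρ).trace = ((1 - a : ℝ) : ℂ) := by rw [haQ.2, hQρre]
  have hQρ'eq : (Q * ρ').trace = ((1 - b : ℝ) : ℂ) := by rw [hbQ.2, hQρ're]
  have hmab : m = a - b := by
    have h := htrPΔ
    rw [hΔdef, Matrix.mul_sub, Matrix.trace_sub, haeq, hbeq] at h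
    exact_mod_cast h.symm
  -- Cauchy-Schwarz step, for both P and Q
  have csstep : ∀ W : Matrix (Fin d) (Fin d) ℂ, Wᴴ = W → W * W = W →
      ‖(SE * (W * ρ)).trace‖ ≤
        Real.sqrt ((W * T).trace.re) * Real.sqrt ((W * ρ).trace.re) := by
    intro W hWh hWW
    have hWWr : ∀ X : Matrix (Fin d) (Fin d) ℂ, W * (W * X) = W * X := fun X => by
      rw [← Matrix.mul_assoc, hWW]
    have key := trace_cs (W * (SE * SR)) (W * SR)
    have e1 : (W * (SE * SR))ᴴ * (W * SR) = SR * (SE * (W * SR)) := by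
      simp only [Matrix.conjTranspose_mul, hSRh, hSEh, hWh, Matrix.mul_assoc, hWWr]
    have t1 : ((W * (SE * SR))ᴴ * (W * SR)).trace = (SE * (W * ρ)).trace := by
      rw [e1, Matrix.trace_mul_comm SR (SE * (W * SR)), Matrix.mul_assoc SE (W * SR) SR,
        Matrix.mul_assoc W SR SR, hSR2]
    have e2 : (W * (SE * SR))ᴴ * (W * (SE * SR)) = SR * (SE * (W * (SE * SR))) := by
      simp only [Matrix.conjTranspose_mul, hSRh, hSEh, hWh, Matrix.mul_assoc, hWWr]
    have t2 : ((W * (SE * SR))ᴴ * (W * (SE * SR))).trace = (W * T).trace := by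
      rw [e2, Matrix.trace_mul_comm SR (SE * (W * (SE * SR))),
        Matrix.mul_assoc SE (W * (SE * SR)) SR, Matrix.mul_assoc W (SE * SR) SR,
        Matrix.mul_assoc SE SR SR, hSR2, Matrix.trace_mul_comm SE (W * (SE * ρ)),
        Matrix.mul_assoc W (SE * ρ) SE, hTdef, Matrix.mul_assoc SE ρ SE]
    have e3 : (W * SR)ᴴ * (W * SR) = SR * (W * SR) := by
      simp only [Matrix.conjTranspose_mul, hSRh, hWh, Matrix.mul_assoc, hWWr]
    have t3 : ((W * SR)ᴴ * (W * SR)).trace = (W * ρ).trace := by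
      rw [e3, Matrix.trace_mul_comm SR (W * SR), Matrix.mul_assoc W SR SR, hSR2]
    rw [t1, t2, t3] at key
    exact key
  have hPT : (P * T).trace = ((r * b : ℝ) : ℂ) := by
    rw [hTp, Matrix.mul_smul, Matrix.trace_smul, hbeq, smul_eq_mul, hpreal]
    push_cast
    ring
  have hQT : (Q * T).trace = ((r * (1 - b) : ℝ) : ℂ) := by
    rw [hTp, Matrix.mul_smul, Matrix.trace_smul, hQρ'eq, smul_eq_mul, hpreal]
    push_cast
    ring
  have bP : ‖(SE * (P * ρ)).trace‖ ≤ Real.sqrt (r * b) * Real.sqrt a := by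
    have h := csstep P hPh hPP
    rwa [hPT, Complex.ofReal_re, ← hadef] at h
  have bQ : ‖(SE * (Q * ρ)).trace‖ ≤ Real.sqrt (r * (1 - b)) * Real.sqrt (1 - a) := by
    have h := csstep Q hQh hQQ
    rwa [hQT, Complex.ofReal_re, hQρre] at h
  have hsum : (SE * (P * ρ)).trace + (SE * (Q * ρ)).trace = (SE * ρ).trace := by
    rw [← Matrix.trace_add, ← Matrix.mul_add, ← Matrix.add_mul, hPQ, Matrix.one_mul]
  -- monotonicity : r ≤ tr(SE * ρ).re
  have hν0 : ∀ i, 0 ≤ hE.1.eigenvalues i := fun i => hE.eigenvalues_nonneg i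
  have hν1 : ∀ i, hE.1.eigenvalues i ≤ 1 := fun i => eig_le_one hE.1 hE1 i
  have hSEspec : specM hE.1 (Real.sqrt ∘ hE.1.eigenvalues) = SE := rfl
  have hEspec : specM hE.1 hE.1.eigenvalues = E := specM_eigen hE.1
  have hadd := specM_add hE.1 (Real.sqrt ∘ hE.1.eigenvalues - hE.1.eigenvalues) hE.1.eigenvalues
  rw [show (Real.sqrt ∘ hE.1.eigenvalues - hE.1.eigenvalues) + hE.1.eigenvalues
      = Real.sqrt ∘ hE.1.eigenvalues from by funext i; simp] at hadd
  have hsub : specM hE.1 (Real.sqrt ∘ hE.1.eigenvalues - hE.1.eigenvalues) = SE - E := by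
    rw [eq_sub_of_add_eq hadd.symm, hSEspec, hEspec]
  have hsubpsd : (SE - E).PosSemidef := by
    rw [← hsub]
    apply specM_psd
    intro i
    simp only [Pi.sub_apply, Function.comp_apply]
    nlinarith [Real.sq_sqrt (hν0 i), Real.sqrt_nonneg (hE.1.eigenvalues i), hν1 i]
  have hmono := (cnonneg_re (trace_mul_psd_nonneg hsubpsd hρpsd)).1
  have hrle : r ≤ ((SE * ρ).trace).re := by
    rw [Matrix.sub_mul, Matrix.trace_sub] at hmono
    simp only [Complex.sub_re] at hmono
    have : r = ((E * ρ).trace).re := by rw [hrdef, hpdef]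
    linarith
  have habs : r ≤ ‖(SE * (P * ρ)).trace‖ + ‖(SE * (Q * ρ)).trace‖ := by
    calc r ≤ ((SE * ρ).trace).re := hrle
    _ ≤ ‖(SE * ρ).trace‖ := Complex.re_le_norm _
    _ = ‖(SE * (P * ρ)).trace + (SE * (Q * ρ)).trace‖ := by rw [hsum]
    _ ≤ _ := norm_add_le _ _
  have hkey : r ≤ Real.sqrt (r * b) * Real.sqrt a + Real.sqrt (r * (1 - b)) * Real.sqrt (1 - a) :=
    le_trans habs (add_le_add bP bQ)
  -- arithmetic
  have h1a : (0:ℝ) ≤ 1 - a := by linarith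
  have h1b : (0:ℝ) ≤ 1 - b := by linarith
  have hkey' : Real.sqrt r * Real.sqrt r ≤
      Real.sqrt r * (Real.sqrt b * Real.sqrt a + Real.sqrt (1 - b) * Real.sqrt (1 - a)) := by
    rw [Real.mul_self_sqrt hpre0]
    rw [Real.sqrt_mul hpre0, Real.sqrt_mul hpre0] at hkey
    calc r ≤ Real.sqrt r * Real.sqrt b * Real.sqrt a
        + Real.sqrt r * Real.sqrt (1 - b) * Real.sqrt (1 - a) := hkey
    _ = _ := by ring
  have hsrpos : 0 < Real.sqrt r := Real.sqrt_pos.mpr hrpos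
  have hX : Real.sqrt r ≤ Real.sqrt b * Real.sqrt a + Real.sqrt (1 - b) * Real.sqrt (1 - a) :=
    le_of_mul_le_mul_left hkey' hsrpos
  have hXnn : 0 ≤ Real.sqrt b * Real.sqrt a + Real.sqrt (1 - b) * Real.sqrt (1 - a) :=
    add_nonneg (mul_nonneg (Real.sqrt_nonneg _) (Real.sqrt_nonneg _))
      (mul_nonneg (Real.sqrt_nonneg _) (Real.sqrt_nonneg _))
  have hrX : Real.sqrt r * Real.sqrt r ≤
      (Real.sqrt b * Real.sqrt a + Real.sqrt (1 - b) * Real.sqrt (1 - a)) *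
      (Real.sqrt b * Real.sqrt a + Real.sqrt (1 - b) * Real.sqrt (1 - a)) :=
    mul_le_mul hX hX (Real.sqrt_nonneg r) hXnn
  rw [Real.mul_self_sqrt hpre0] at hrX
  have hab2 : (a - b)^2 ≤ 1 - r := by
    set sa := Real.sqrt a
    set sb := Real.sqrt b
    set ta := Real.sqrt (1 - a)
    set tb := Real.sqrt (1 - b)
    have hXX : (sb * sa + tb * ta) * (sb * sa + tb * ta)
        = (sb^2)*(sa^2) + (tb^2)*(ta^2) + 2*(sa*ta)*(sb*tb) := by ring
    rw [Real.sq_sqrt ha0, Real.sq_sqrt hb0, Real.sq_sqrt h1a, Real.sq_sqrt h1b] at hXX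
    have hAM : 2*(sa*ta)*(sb*tb) ≤ (sa*ta)^2 + (sb*tb)^2 := two_mul_le_add_sq _ _
    have hP1 : (sa*ta)^2 = a*(1-a) := by
      rw [mul_pow, Real.sq_sqrt ha0, Real.sq_sqrt h1a]
    have hP2 : (sb*tb)^2 = b*(1-b) := by
      rw [mul_pow, Real.sq_sqrt hb0, Real.sq_sqrt h1b]
    have hident : b*a + (1-b)*(1-a) + (a*(1-a) + b*(1-b)) = 1 - (a-b)^2 := by ring
    linarith [hrX, hXX, hAM, hP1.le, hP2.le, hP1.ge, hP2.ge, hident]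
  have h6 : (a - b)^2 ≤ ε := by linarith
  have h7 : a - b ≤ Real.sqrt ε := by
    calc a - b ≤ |a - b| := le_abs_self _
    _ = Real.sqrt ((a - b)^2) := (Real.sqrt_sq_eq_abs _).symm
    _ ≤ Real.sqrt ε := Real.sqrt_le_sqrt h6
  show traceNorm Δ / 2 ≤ Real.sqrt ε
  rw [hTN]
  linarith
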